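/- arXiv:1207.4545 — 2 statements merged into one kernel-verified Lean document; each statement's English description precedes it below -/
import Mathlib

section
/- Fix a finite list m_1,…,m_k of natural numbers, a positive integer n, and an integer b. Then there exists a Laurent polynomial L with complex coefficients such that for every positive integer c, β_{m_1,…,m_k}(nc, bc) = L(c). In particular β_{m_1,…,m_k}(c, 0) and β_{m_1,…,m_k}(2c, c) are Laurent polynomials of c. -/
/-- `ζ_n = exp(2πi/n)`, the standard primitive `n`-th root of unity. -/
noncomputable def zeta (n : ℕ) : ℂ := Complex.exp (2 * (Real.pi : ℂ) * Complex.I / (n : ℂ))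

/-- `β_{m_1,…,m_k}(n,b) = ∑_{a=0}^{n-1} ζ_n^{ab} ∏_j B_{m_j}(a/n)`, where
`B_m` is the `m`-th Bernoulli polynomial. -/
noncomputable def betaB (M : List ℕ) (n : ℕ) (b : ℤ) : ℂ :=
  ∑ a ∈ Finset.range n, zeta n ^ ((a : ℤ) * b) *
    (M.map fun m => (((Polynomial.bernoulli m).eval ((a : ℚ) / (n : ℚ)) : ℚ) : ℂ)).prod

open Finset

section Laurent

def IsLaurent (f : ℕ → ℂ) : Prop :=
  ∃ N : ℕ, ∃ coef : ℤ → ℂ, ∀ c : ℕ, 0 < c →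
    f c = ∑ j ∈ Finset.Icc (-(N : ℤ)) (N : ℤ), coef j * (c : ℂ) ^ j

lemma isLaurent_monomial (α : ℂ) (e : ℤ) : IsLaurent (fun c => α * (c : ℂ) ^ e) := by
  refine ⟨e.natAbs, fun j => if j = e then α else 0, fun c hc => ?_⟩
  have he : e ∈ Finset.Icc (-(e.natAbs : ℤ)) (e.natAbs : ℤ) := by
    simp only [Finset.mem_Icc]; omega
  rw [Finset.sum_eq_single_of_mem e he]
  · simp
  · intro j _ hj; simp [hj]

lemma isLaurent_extend (N N' : ℕ) (h : N ≤ N') (coef : ℤ → ℂ) (c : ℕ) :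
    ∑ j ∈ Finset.Icc (-(N : ℤ)) (N : ℤ), coef j * (c : ℂ) ^ j =
    ∑ j ∈ Finset.Icc (-(N' : ℤ)) (N' : ℤ),
      (if j ∈ Finset.Icc (-(N : ℤ)) (N : ℤ) then coef j else 0) * (c : ℂ) ^ j := by
  symm
  rw [← Finset.sum_subset (show Finset.Icc (-(N:ℤ)) (N:ℤ) ⊆ Finset.Icc (-(N':ℤ)) (N':ℤ) from
    Finset.Icc_subset_Icc (by omega) (by omega)) (fun x _ hnx => by simp [hnx])]
  apply Finset.sum_congr rfl; intro j hj; simp [hj]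

lemma isLaurent_add {f g : ℕ → ℂ} (hf : IsLaurent f) (hg : IsLaurent g) :
    IsLaurent (fun c => f c + g c) := by
  obtain ⟨N1, c1, h1⟩ := hf
  obtain ⟨N2, c2, h2⟩ := hg
  refine ⟨N1 + N2, fun j =>
    (if j ∈ Finset.Icc (-(N1 : ℤ)) (N1 : ℤ) then c1 j else 0) +
    (if j ∈ Finset.Icc (-(N2 : ℤ)) (N2 : ℤ) then c2 j else 0), fun c hc => ?_⟩
  simp only [add_mul, Finset.sum_add_distrib]
  rw [h1 c hc, h2 c hc, isLaurent_extend N1 (N1 + N2) (by omega) c1 c,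
    isLaurent_extend N2 (N1 + N2) (by omega) c2 c]

lemma isLaurent_zero : IsLaurent (fun _ => 0) := ⟨0, fun _ => 0, by simp⟩

lemma isLaurent_sum {ι : Type*} (s : Finset ι) (f : ι → ℕ → ℂ)
    (h : ∀ i ∈ s, IsLaurent (f i)) : IsLaurent (fun c => ∑ i ∈ s, f i c) := by
  classical
  induction s using Finset.induction_on with
  | empty => simpa using isLaurent_zero
  | @insert a s hx ih =>
    simp only [Finset.sum_insert hx]
    exact isLaurent_add (h a (Finset.mem_insert_self a s))
      (ih fun i hi => h i (Finset.mem_insert_of_mem hi))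

lemma isLaurent_const_mul (α : ℂ) {f : ℕ → ℂ} (hf : IsLaurent f) :
    IsLaurent (fun c => α * f c) := by
  obtain ⟨N, coef, h⟩ := hf
  refine ⟨N, fun j => α * coef j, fun c hc => ?_⟩
  show α * f c = _
  rw [h c hc, Finset.mul_sum]
  apply Finset.sum_congr rfl
  intro j _; ring

end Laurent

section RatSide

lemma term_id (n c r d i t : ℕ) (hn : (n:ℚ) ≠ 0) (hc : (c:ℚ) ≠ 0) :
    (n:ℚ)^i * (r:ℚ)^(d-i) * (d.choose i) *
      (bernoulli t * ((i+1).choose t) * (c:ℚ)^(i+1-t) / (i+1)) * (((n:ℚ)*c)⁻¹)^d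
    = ((n:ℚ)^(i:ℤ) * (n:ℚ)^(-(d:ℤ)) * (r:ℚ)^(d-i) * (d.choose i) * bernoulli t *
        ((i+1).choose t) / (i+1)) * (c:ℚ)^(((i+1-t:ℕ):ℤ) - (d:ℤ)) := by
  have hi : ((i:ℚ)+1) ≠ 0 := by positivity
  rw [zpow_sub₀ hc, zpow_natCast, zpow_natCast, zpow_natCast, zpow_neg, zpow_natCast]
  field_simp
  ring_nf
  rw [inv_pow, inv_pow]
  field_simp

lemma sum_pow_div (n c : ℕ) (hn : (n:ℚ) ≠ 0) (hc : (c:ℚ) ≠ 0) (r d : ℕ) :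
    ∑ s ∈ range c, (((r : ℚ) + n * s) / ((n : ℚ) * c)) ^ d =
    ∑ i ∈ range (d + 1), ∑ t ∈ range (i + 1),
      ((n : ℚ) ^ (i:ℤ) * (n : ℚ) ^ (-(d : ℤ)) * (r : ℚ) ^ (d - i) * (d.choose i) *
        bernoulli t * ((i + 1).choose t) / (i + 1)) * (c : ℚ) ^ (((i + 1 - t : ℕ) : ℤ) - (d:ℤ)) := by
  have key : ∀ s ∈ range c, (((r : ℚ) + n * s) / ((n : ℚ) * c)) ^ d =
      ∑ i ∈ range (d+1), ((n:ℚ)^i * (s:ℚ)^i * (r:ℚ)^(d-i) * (d.choose i)) * (((n:ℚ)*c)⁻¹)^d := by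
    intro s _
    rw [div_pow, div_eq_mul_inv, inv_pow, add_comm, add_pow, sum_mul]
    apply Finset.sum_congr rfl
    intro i _
    rw [mul_pow]
  rw [Finset.sum_congr rfl key, Finset.sum_comm]
  apply Finset.sum_congr rfl
  intro i _
  have : ∑ s ∈ range c, ((n:ℚ)^i * (s:ℚ)^i * (r:ℚ)^(d-i) * (d.choose i)) * (((n:ℚ)*c)⁻¹)^d
      = ((n:ℚ)^i * (r:ℚ)^(d-i) * (d.choose i) * (((n:ℚ)*c)⁻¹)^d) * ∑ s ∈ range c, (s:ℚ)^i := by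
    rw [Finset.mul_sum]
    apply Finset.sum_congr rfl
    intro s _
    ring
  rw [this, sum_range_pow, Finset.mul_sum]
  apply Finset.sum_congr rfl
  intro t _
  rw [← term_id n c r d i t hn hc]
  ring

lemma T_eq (n c : ℕ) (hn : (n:ℚ) ≠ 0) (hc : (c:ℚ) ≠ 0) (P : Polynomial ℚ) (r : ℕ) :
    ∑ s ∈ range c, P.eval (((r:ℚ) + n*s)/((n:ℚ)*c)) =
    ∑ d ∈ range (P.natDegree+1), ∑ i ∈ range (d+1), ∑ t ∈ range (i+1),
      (P.coeff d * ((n:ℚ)^(i:ℤ) * (n:ℚ)^(-(d:ℤ)) * (r:ℚ)^(d-i) * (d.choose i) *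
        bernoulli t * ((i+1).choose t)/(i+1))) * (c:ℚ)^(((i+1-t:ℕ):ℤ)-(d:ℤ)) := by
  have h1 : ∀ s ∈ range c, P.eval (((r:ℚ) + n*s)/((n:ℚ)*c)) =
      ∑ d ∈ range (P.natDegree+1), P.coeff d * (((r:ℚ) + n*s)/((n:ℚ)*c))^d :=
    fun s _ => Polynomial.eval_eq_sum_range _
  rw [Finset.sum_congr rfl h1, Finset.sum_comm]
  apply Finset.sum_congr rfl
  intro d _
  rw [← Finset.mul_sum, sum_pow_div n c hn hc r d, Finset.mul_sum]
  apply Finset.sum_congr rfl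
  intro i _
  rw [Finset.mul_sum]
  apply Finset.sum_congr rfl
  intro t _
  ring

end RatSide

section Zeta

lemma zeta_pow_self (k : ℕ) (hk : k ≠ 0) : zeta k ^ (k:ℕ) = 1 := by
  unfold zeta
  rw [← Complex.exp_nat_mul]
  have hk' : (k:ℂ) ≠ 0 := Nat.cast_ne_zero.2 hk
  have : (k:ℂ) * (2 * (Real.pi : ℂ) * Complex.I / (k:ℂ)) = 2 * (Real.pi:ℂ) * Complex.I := by
    field_simp
  rw [this, Complex.exp_two_pi_mul_I]

lemma zeta_mul_pow (n c : ℕ) (hn : n ≠ 0) (hc : c ≠ 0) : zeta (n*c) ^ (c:ℕ) = zeta n := by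
  unfold zeta
  rw [← Complex.exp_nat_mul]
  congr 1
  have hn' : (n:ℂ) ≠ 0 := Nat.cast_ne_zero.2 hn
  have hc' : (c:ℂ) ≠ 0 := Nat.cast_ne_zero.2 hc
  push_cast
  field_simp

lemma zeta_ne_zero (k : ℕ) : zeta k ≠ 0 := Complex.exp_ne_zero _

lemma zeta_exp (n c : ℕ) (hn : n ≠ 0) (hc : c ≠ 0) (r s : ℕ) (b : ℤ) :
    zeta (n*c) ^ (((r + n*s : ℕ):ℤ) * (b * (c:ℤ))) = zeta n ^ ((r:ℤ) * b) := by
  have h1 : zeta (n*c) ^ (c:ℤ) = zeta n := by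
    rw [zpow_natCast]; exact zeta_mul_pow n c hn hc
  have h2 : zeta n ^ (n:ℤ) = 1 := by
    rw [zpow_natCast]; exact zeta_pow_self n hn
  have hz : zeta n ≠ 0 := zeta_ne_zero n
  calc zeta (n*c) ^ (((r + n*s : ℕ):ℤ) * (b * (c:ℤ)))
      = (zeta (n*c) ^ (c:ℤ)) ^ (((r:ℤ) + (n:ℤ)*(s:ℤ)) * b) := by
        rw [← zpow_mul]; congr 1; push_cast; ring
    _ = zeta n ^ ((r:ℤ)*b + (n:ℤ)*((s:ℤ)*b)) := by rw [h1]; congr 1; ring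
    _ = zeta n ^ ((r:ℤ)*b) * (zeta n ^ (n:ℤ))^((s:ℤ)*b) := by
        rw [zpow_add₀ hz]
        congr 1
        rw [zpow_mul]
    _ = zeta n ^ ((r:ℤ)*b) := by rw [h2, one_zpow, mul_one]

end Zeta

lemma sum_reindex {β : Type*} [AddCommMonoid β] (n c : ℕ) (hn : 0 < n) (f : ℕ → β) :
    ∑ a ∈ range (n*c), f a = ∑ r ∈ range n, ∑ s ∈ range c, f (r + n*s) := by
  rw [← Finset.sum_product']
  apply Finset.sum_nbij' (i := fun a => ((a % n, a / n) : ℕ × ℕ)) (j := fun p => p.1 + n*p.2)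
  · intro a ha
    simp only [Finset.mem_range] at ha
    simp only [Finset.mem_product, Finset.mem_range]
    constructor
    · exact Nat.mod_lt a hn
    · rw [Nat.div_lt_iff_lt_mul hn]; rw [mul_comm] at ha; exact ha
  · intro p hp
    simp only [Finset.mem_product, Finset.mem_range] at hp
    simp only [Finset.mem_range]
    have h1 : p.1 + n*p.2 < n*(p.2+1) := by rw [Nat.mul_succ]; omega
    exact lt_of_lt_of_le h1 (Nat.mul_le_mul_left n hp.2)
  · intro a _
    simp [Nat.mod_add_div]
  · intro p hp
    simp only [Finset.mem_product, Finset.mem_range] at hp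
    have h1 : (p.1 + n*p.2) % n = p.1 := by
      rw [Nat.add_mul_mod_self_left, Nat.mod_eq_of_lt hp.1]
    have h2 : (p.1 + n*p.2) / n = p.2 := by
      rw [Nat.add_mul_div_left _ _ hn, Nat.div_eq_of_lt hp.1, zero_add]
    simp [h1, h2]
  · intro a _
    simp [Nat.mod_add_div]

lemma prod_eval (M : List ℕ) (x : ℚ) :
    (M.map fun m => (((Polynomial.bernoulli m).eval x : ℚ) : ℂ)).prod
      = ((((M.map Polynomial.bernoulli).prod).eval x : ℚ) : ℂ) := by
  induction M with
  | nil => simp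
  | cons m M ih => simp only [List.map_cons, List.prod_cons, Polynomial.eval_mul, Rat.cast_mul, ih]

/-- For fixed `m_1,…,m_k`, `n` and `b`, the function `c ↦ β_{m_1,…,m_k}(nc, bc)` is a
Laurent polynomial of `c` (with complex coefficients). -/
theorem betaB_scaling_laurent (M : List ℕ) (n : ℕ) (hn : 0 < n) (b : ℤ) :
    ∃ (N : ℕ) (coef : ℤ → ℂ), ∀ c : ℕ, 0 < c →
      betaB M (n * c) (b * (c : ℤ)) =
        ∑ j ∈ Finset.Icc (-(N : ℤ)) (N : ℤ), coef j * (c : ℂ) ^ j := by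
  set P : Polynomial ℚ := (M.map Polynomial.bernoulli).prod with hP
  set Q : ℕ → ℕ → ℕ → ℕ → ℚ := fun r d i t =>
    P.coeff d * ((n:ℚ)^(i:ℤ) * (n:ℚ)^(-(d:ℤ)) * (r:ℚ)^(d-i) * (d.choose i) *
      bernoulli t * ((i+1).choose t)/(i+1)) with hQ
  set e : ℕ → ℕ → ℕ → ℤ := fun d i t => ((i+1-t:ℕ):ℤ) - (d:ℤ) with he
  have key : ∀ c : ℕ, 0 < c → betaB M (n*c) (b * (c:ℤ)) =
      ∑ r ∈ range n, zeta n ^ ((r:ℤ)*b) *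
        ∑ d ∈ range (P.natDegree+1), ∑ i ∈ range (d+1), ∑ t ∈ range (i+1),
          ((Q r d i t : ℚ) : ℂ) * (c:ℂ) ^ (e d i t) := by
    intro c hc
    have hn0 : n ≠ 0 := hn.ne'
    have hc0 : c ≠ 0 := hc.ne'
    have hnq : (n:ℚ) ≠ 0 := Nat.cast_ne_zero.2 hn0
    have hcq : (c:ℚ) ≠ 0 := Nat.cast_ne_zero.2 hc0
    unfold betaB
    rw [sum_reindex n c hn]
    apply Finset.sum_congr rfl
    intro r _
    have hrw : ∀ s ∈ range c,
        zeta (n*c) ^ (((r + n*s : ℕ):ℤ) * (b * (c:ℤ))) *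
          (M.map fun m => (((Polynomial.bernoulli m).eval (((r + n*s : ℕ) : ℚ) / ((n*c : ℕ) : ℚ)) : ℚ) : ℂ)).prod
        = zeta n ^ ((r:ℤ)*b) * ((P.eval (((r:ℚ) + n*s)/((n:ℚ)*c)) : ℚ) : ℂ) := by
      intro s _
      rw [zeta_exp n c hn0 hc0 r s b, prod_eval]
      have harg : (((r + n*s : ℕ) : ℚ) / ((n*c : ℕ) : ℚ)) = ((r:ℚ) + n*s)/((n:ℚ)*c) := by
        push_cast; ring
      rw [harg]
    rw [Finset.sum_congr rfl hrw, ← Finset.mul_sum, ← Rat.cast_sum,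
      T_eq n c hnq hcq P r]
    congr 1
    push_cast
    apply Finset.sum_congr rfl; intro d _
    apply Finset.sum_congr rfl; intro i _
    apply Finset.sum_congr rfl; intro t _
    simp only [hQ, he]
    push_cast
    ring
  have hL : IsLaurent (fun c => ∑ r ∈ range n, zeta n ^ ((r:ℤ)*b) *
      ∑ d ∈ range (P.natDegree+1), ∑ i ∈ range (d+1), ∑ t ∈ range (i+1),
        ((Q r d i t : ℚ) : ℂ) * (c:ℂ) ^ (e d i t)) := by
    apply isLaurent_sum
    intro r _
    apply isLaurent_const_mul
    apply isLaurent_sum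
    intro d _
    apply isLaurent_sum
    intro i _
    apply isLaurent_sum
    intro t _
    exact isLaurent_monomial _ _
  obtain ⟨N, coef, h⟩ := hL
  exact ⟨N, coef, fun c hc => (key c hc).trans (h c hc)⟩
end

section
/- Fix natural numbers k_1, k_2, k_3. Then there exists a Laurent polynomial L with complex coefficients such that for every integer n ≥ 2, ∑_{b_1=0}^{n-1} ∑_{b_2=0}^{n-1} (α_{n,b_1})^{k_1} · (α_{n,b_2})^{k_2} · (α_{n,b_1+b_2})^{k_3} = L(n). -/
/-- `α_{n,b} = 1/(ζ_n^b − 1)` if `n ∤ b`, and `α_{n,b} = 0` if `n ∣ b`. -/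
noncomputable def alphaC (n : ℕ) (b : ℤ) : ℂ :=
  if (n : ℤ) ∣ b then 0 else 1 / (zeta n ^ b - 1)

open Finset

section Basics
variable {n : ℕ} (hn : 2 ≤ n)

theorem zeta_prim (hn : 2 ≤ n) : IsPrimitiveRoot (zeta n) n :=
  Complex.isPrimitiveRoot_exp n (by omega)

theorem zeta_zpow_eq_one_iff (hn : 2 ≤ n) {b : ℤ} : zeta n ^ b = 1 ↔ (n : ℤ) ∣ b :=
  (zeta_prim hn).zpow_eq_one_iff_dvd b

theorem zeta_ne_zero_s15 (hn : 2 ≤ n) : zeta n ≠ 0 := Complex.exp_ne_zero _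

theorem alphaC_congr (hn : 2 ≤ n) {b c : ℤ} (h : (n : ℤ) ∣ b - c) : alphaC n b = alphaC n c := by
  have hz : zeta n ^ b = zeta n ^ c := by
    have h1 : zeta n ^ (b - c) = 1 := (zeta_zpow_eq_one_iff hn).2 h
    have := zeta_ne_zero_s15 hn
    rw [zpow_sub₀ this, div_eq_one_iff_eq (zpow_ne_zero _ this)] at h1
    exact h1
  have hd : ((n:ℤ) ∣ b) ↔ ((n:ℤ) ∣ c) := by
    constructor <;> intro hx
    · have := dvd_sub hx h; simpa using this
    · have := dvd_add hx h; simpa using this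
  unfold alphaC
  by_cases hb : (n:ℤ) ∣ b
  · rw [if_pos hb, if_pos (hd.1 hb)]
  · rw [if_neg hb, if_neg (fun hc => hb (hd.2 hc)), hz]

/-- alpha as a function on `ZMod n`. -/
noncomputable def Az (n : ℕ) (x : ZMod n) : ℂ := alphaC n (x.val : ℤ)

theorem alphaC_eq_Az (hn : 2 ≤ n) (b : ℤ) :
    haveI : NeZero n := ⟨by omega⟩
    alphaC n b = Az n (b : ZMod n) := by
  haveI : NeZero n := ⟨by omega⟩
  refine alphaC_congr hn ?_
  have h := ZMod.val_intCast (n := n) b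
  have h2 := Int.emod_emod_of_dvd b (dvd_refl (n:ℤ))
  rw [h]
  exact Int.dvd_self_sub_of_emod_eq rfl

end Basics

section AzLemmas
variable {n : ℕ}

theorem Az_zero (hn : 2 ≤ n) :
    haveI : NeZero n := ⟨by omega⟩
    Az n 0 = 0 := by
  haveI : NeZero n := ⟨by omega⟩
  unfold Az alphaC
  rw [ZMod.val_zero]
  simp

variable [NeZero n]

theorem zeta_pow_val_ne_one (hn : 2 ≤ n) (x : ZMod n) (hx : x ≠ 0) :
    zeta n ^ (x.val) ≠ 1 := by
  refine (zeta_prim hn).pow_ne_one_of_pos_of_lt ?_ (ZMod.val_lt x)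
  have : x.val ≠ 0 := fun h => hx (by rwa [← ZMod.val_eq_zero])
  omega

theorem Az_of_ne (hn : 2 ≤ n) (x : ZMod n) (hx : x ≠ 0) :
    Az n x = 1 / (zeta n ^ (x.val) - 1) := by
  unfold Az alphaC
  rw [if_neg, zpow_natCast]
  intro hdvd
  have h1 : n ∣ x.val := by exact_mod_cast hdvd
  have h2 : x.val < n := ZMod.val_lt x
  have h3 : x.val = 0 := Nat.eq_zero_of_dvd_of_lt h1 h2
  exact hx (by rwa [← ZMod.val_eq_zero])

theorem zeta_pow_val_add (hn : 2 ≤ n) (x y : ZMod n) :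
    zeta n ^ ((x + y).val) = zeta n ^ (x.val) * zeta n ^ (y.val) := by
  rw [← pow_add]
  rw [ZMod.val_add]
  conv_rhs => rw [← Nat.div_add_mod (x.val + y.val) n, pow_add, pow_mul,
    (zeta_prim hn).pow_eq_one, one_pow, one_mul]

theorem Az_neg (hn : 2 ≤ n) (x : ZMod n) (hx : x ≠ 0) :
    Az n (-x) = -1 - Az n x := by
  have hnx : -x ≠ 0 := fun h => hx (by simpa using congrArg Neg.neg h)
  have hu1 : zeta n ^ (x.val) ≠ 1 := zeta_pow_val_ne_one hn x hx
  have hw1 : zeta n ^ ((-x).val) ≠ 1 := zeta_pow_val_ne_one hn (-x) hnx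
  have hprod : zeta n ^ (x.val) * zeta n ^ ((-x).val) = 1 := by
    rw [← zeta_pow_val_add hn x (-x)]
    simp [ZMod.val_zero]
  rw [Az_of_ne hn x hx, Az_of_ne hn (-x) hnx]
  have hu0 : zeta n ^ (x.val) ≠ 0 := pow_ne_zero _ (zeta_ne_zero_s15 hn)
  set u := zeta n ^ (x.val)
  set w := zeta n ^ ((-x).val)
  have hw : w = u⁻¹ := by
    field_simp
    linear_combination hprod
  have hu1' : u - 1 ≠ 0 := sub_ne_zero.2 hu1
  have hinv : u⁻¹ - 1 ≠ 0 := by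
    rw [hw] at hw1; exact sub_ne_zero.2 hw1
  rw [hw, div_eq_iff hinv]
  field_simp
  ring

theorem Az_cocycle (hn : 2 ≤ n) (x y : ZMod n) (hx : x ≠ 0) (hy : y ≠ 0) (hxy : x + y ≠ 0) :
    Az n x * Az n y = Az n (x + y) * (Az n x + Az n y + 1) := by
  have hu1 : zeta n ^ (x.val) ≠ 1 := zeta_pow_val_ne_one hn x hx
  have hv1 : zeta n ^ (y.val) ≠ 1 := zeta_pow_val_ne_one hn y hy
  have hw1 : zeta n ^ ((x+y).val) ≠ 1 := zeta_pow_val_ne_one hn _ hxy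
  rw [Az_of_ne hn x hx, Az_of_ne hn y hy, Az_of_ne hn _ hxy, zeta_pow_val_add hn x y]
  set u := zeta n ^ (x.val)
  set v := zeta n ^ (y.val)
  have h1 : u - 1 ≠ 0 := sub_ne_zero.2 hu1
  have h2 : v - 1 ≠ 0 := sub_ne_zero.2 hv1
  have h3 : u * v - 1 ≠ 0 := by
    rw [zeta_pow_val_add hn x y] at hw1; exact sub_ne_zero.2 hw1
  field_simp
  ring

end AzLemmas

section Newton
open Polynomial MvPolynomial

noncomputable def Ssum (k : ℕ) (n : ℕ) : ℂ := ∑ b ∈ Finset.range n, alphaC n (b : ℤ) ^ k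

noncomputable def Ecoef (i : ℕ) (n : ℕ) : ℂ := (-1)^i * (n.choose (i+1) : ℂ) / n

noncomputable def Hpol (n : ℕ) : Polynomial ℂ := (Polynomial.X + 1)^n - Polynomial.X^n

noncomputable def vroot (n : ℕ) : Fin (n-1) → ℂ := fun i => alphaC n (((i : ℕ) + 1 : ℕ) : ℤ)

variable {n : ℕ}

theorem alphaC_form (hn : 2 ≤ n) {b : ℕ} (h1 : 0 < b) (h2 : b < n) :
    alphaC n (b : ℤ) = 1 / (zeta n ^ b - 1) := by
  unfold alphaC
  rw [if_neg, zpow_natCast]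
  intro hdvd
  have : n ∣ b := by exact_mod_cast hdvd
  have := Nat.le_of_dvd h1 this
  omega

theorem zeta_pow_ne_one (hn : 2 ≤ n) {b : ℕ} (h1 : 0 < b) (h2 : b < n) :
    zeta n ^ b ≠ 1 := (zeta_prim hn).pow_ne_one_of_pos_of_lt h1.ne' h2

theorem Hpol_coeff (k : ℕ) : (Hpol n).coeff k =
    (n.choose k : ℂ) - (if n = k then 1 else 0) := by
  unfold Hpol
  rw [Polynomial.coeff_sub, Polynomial.coeff_X_add_one_pow, Polynomial.coeff_X_pow]
  by_cases h : n = k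
  · simp [h]
  · rw [if_neg h, if_neg (fun hh => h hh.symm)]

theorem Hpol_coeff_pred (hn : 2 ≤ n) : (Hpol n).coeff (n-1) = (n : ℂ) := by
  rw [Hpol_coeff, if_neg (by omega)]
  have : n.choose (n-1) = n := by
    have h1 : n - 1 = n - 1 := rfl
    have := Nat.choose_symm (by omega : 1 ≤ n)
    simpa [Nat.choose_one_right] using this
  simp [this]

theorem Hpol_natDegree (hn : 2 ≤ n) : (Hpol n).natDegree = n - 1 := by
  apply le_antisymm
  · rw [Polynomial.natDegree_le_iff_coeff_eq_zero]
    intro m hm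
    rw [Hpol_coeff]
    by_cases h : m = n
    · subst h; simp
    · rw [if_neg (fun hh => h hh.symm), Nat.choose_eq_zero_of_lt (by omega)]
      simp
  · apply Polynomial.le_natDegree_of_ne_zero
    rw [Hpol_coeff_pred hn]
    exact_mod_cast Nat.cast_ne_zero.2 (by omega : n ≠ 0)

theorem Hpol_leadingCoeff (hn : 2 ≤ n) : (Hpol n).leadingCoeff = (n : ℂ) := by
  rw [Polynomial.leadingCoeff, Hpol_natDegree hn, Hpol_coeff_pred hn]

theorem Hpol_ne_zero (hn : 2 ≤ n) : Hpol n ≠ 0 := by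
  intro h
  have := Hpol_leadingCoeff hn
  rw [h, Polynomial.leadingCoeff_zero] at this
  exact (Nat.cast_ne_zero.2 (by omega : n ≠ 0)) this.symm

theorem Hpol_root (hn : 2 ≤ n) {b : ℕ} (h1 : 0 < b) (h2 : b < n) :
    (Hpol n).IsRoot (alphaC n (b : ℤ)) := by
  have ht1 : zeta n ^ b ≠ 1 := zeta_pow_ne_one hn h1 h2
  have htn : (zeta n ^ b) ^ n = 1 := by
    rw [← pow_mul, mul_comm, pow_mul, (zeta_prim hn).pow_eq_one, one_pow]
  rw [alphaC_form hn h1 h2]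
  set t := zeta n ^ b
  have hts : t - 1 ≠ 0 := sub_ne_zero.2 ht1
  unfold Polynomial.IsRoot Hpol
  simp only [Polynomial.eval_sub, Polynomial.eval_pow, Polynomial.eval_add,
    Polynomial.eval_X, Polynomial.eval_one]
  have key : 1 / (t - 1) + 1 = t * (1 / (t - 1)) := by field_simp; ring
  rw [key, mul_pow, htn, one_mul, sub_self]

theorem vroot_injective (hn : 2 ≤ n) : Function.Injective (vroot n) := by
  intro i j hij
  unfold vroot at hij
  have hi2 : (i:ℕ) + 1 < n := by omega
  have hj2 : (j:ℕ) + 1 < n := by omega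
  rw [alphaC_form hn (Nat.succ_pos _) hi2, alphaC_form hn (Nat.succ_pos _) hj2] at hij
  have h1 : zeta n ^ ((i:ℕ)+1) - 1 ≠ 0 := sub_ne_zero.2 (zeta_pow_ne_one hn (Nat.succ_pos _) hi2)
  have h2 : zeta n ^ ((j:ℕ)+1) - 1 ≠ 0 := sub_ne_zero.2 (zeta_pow_ne_one hn (Nat.succ_pos _) hj2)
  rw [div_eq_div_iff h1 h2, one_mul, one_mul] at hij
  have : zeta n ^ ((i:ℕ)+1) = zeta n ^ ((j:ℕ)+1) := by linear_combination -hij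
  have := (zeta_prim hn).pow_inj hi2 hj2 this
  exact Fin.ext (by omega)

theorem Hpol_roots (hn : 2 ≤ n) :
    (Hpol n).roots = Multiset.map (vroot n) Finset.univ.val := by
  have hcard : Multiset.card (Hpol n).roots = n - 1 := by
    rw [← Hpol_natDegree hn]
    exact (Polynomial.splits_iff_card_roots.1 (IsAlgClosed.splits _))
  have hsub : Multiset.map (vroot n) Finset.univ.val ≤ (Hpol n).roots := by
    rw [Multiset.le_iff_subset]
    · intro x hx
      obtain ⟨i, _, rfl⟩ := Multiset.mem_map.1 hx
      rw [Polynomial.mem_roots (Hpol_ne_zero hn)]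
      exact Hpol_root hn (Nat.succ_pos _) (by omega)
    · exact Multiset.Nodup.map (vroot_injective hn) Finset.univ.nodup
  refine (Multiset.eq_of_le_of_card_le hsub ?_).symm
  rw [hcard, Multiset.card_map]
  simp

theorem esymm_vroot (hn : 2 ≤ n) (i : ℕ) :
    (Multiset.map (vroot n) Finset.univ.val).esymm i = Ecoef i n := by
  have hn0 : (n : ℂ) ≠ 0 := Nat.cast_ne_zero.2 (by omega)
  rw [← Hpol_roots hn]
  by_cases hi : i ≤ n - 1
  · have hcard : Multiset.card (Hpol n).roots = (Hpol n).natDegree :=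
      Polynomial.splits_iff_card_roots.1 (IsAlgClosed.splits (Hpol n))
    have hcoeff := Polynomial.coeff_eq_esymm_roots_of_card
      (p := Hpol n) hcard
      (k := n - 1 - i) (by rw [Hpol_natDegree hn]; omega)
    rw [Hpol_natDegree hn, Hpol_leadingCoeff hn] at hcoeff
    have hsub : n - 1 - (n - 1 - i) = i := by omega
    rw [hsub] at hcoeff
    rw [Hpol_coeff, if_neg (by omega)] at hcoeff
    have hch : n.choose (n - 1 - i) = n.choose (i+1) := by
      have := Nat.choose_symm (by omega : i + 1 ≤ n)
      have heq : n - (i+1) = n - 1 - i := by omega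
      rw [heq] at this
      exact this
    rw [hch] at hcoeff
    simp only [sub_zero] at hcoeff
    unfold Ecoef
    have hsq : ((-1:ℂ))^i * ((-1:ℂ))^i = 1 := by
      rw [← pow_add, ← two_mul, pow_mul]; norm_num
    rw [eq_div_iff hn0, hcoeff]
    linear_combination (-((Hpol n).roots.esymm i * (n:ℂ))) * hsq
  · have hi2 : n - 1 < i := by omega
    rw [Multiset.esymm, Multiset.powersetCard_eq_empty _ (by
      rw [Polynomial.splits_iff_card_roots.1 (IsAlgClosed.splits (Hpol n)),
        Hpol_natDegree hn]
      omega)]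
    simp only [Multiset.map_zero, Multiset.sum_zero]
    unfold Ecoef
    rw [Nat.choose_eq_zero_of_lt (by omega)]
    simp

end Newton

/-- Laurent-polynomial-representable functions (for n ≥ 2). -/
def IsLP (f : ℕ → ℂ) : Prop :=
  ∃ (N : ℕ) (P : Polynomial ℂ), ∀ n : ℕ, 2 ≤ n → f n * (n : ℂ) ^ N = P.eval (n : ℂ)

namespace IsLP

theorem congr {f g : ℕ → ℂ} (h : IsLP g) (hfg : ∀ n, 2 ≤ n → f n = g n) : IsLP f := by
  obtain ⟨N, P, hP⟩ := h
  exact ⟨N, P, fun n hn => by rw [hfg n hn]; exact hP n hn⟩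

theorem const (c : ℂ) : IsLP (fun _ => c) :=
  ⟨0, Polynomial.C c, fun n hn => by simp⟩

theorem natCast : IsLP (fun n => (n : ℂ)) :=
  ⟨0, Polynomial.X, fun n hn => by simp⟩

theorem add {f g : ℕ → ℂ} (hf : IsLP f) (hg : IsLP g) : IsLP (fun n => f n + g n) := by
  obtain ⟨N, P, hP⟩ := hf
  obtain ⟨M, Q, hQ⟩ := hg
  refine ⟨N + M, P * Polynomial.X ^ M + Q * Polynomial.X ^ N, fun n hn => ?_⟩
  have := hP n hn; have := hQ n hn
  simp only [Polynomial.eval_add, Polynomial.eval_mul, Polynomial.eval_pow, Polynomial.eval_X]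
  rw [← hP n hn, ← hQ n hn]; ring

theorem mul {f g : ℕ → ℂ} (hf : IsLP f) (hg : IsLP g) : IsLP (fun n => f n * g n) := by
  obtain ⟨N, P, hP⟩ := hf
  obtain ⟨M, Q, hQ⟩ := hg
  refine ⟨N + M, P * Q, fun n hn => ?_⟩
  simp only [Polynomial.eval_mul]
  rw [← hP n hn, ← hQ n hn]; ring

theorem smul (c : ℂ) {f : ℕ → ℂ} (hf : IsLP f) : IsLP (fun n => c * f n) :=
  (const c).mul hf

theorem neg {f : ℕ → ℂ} (hf : IsLP f) : IsLP (fun n => - f n) := by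
  have := (const (-1)).mul hf
  exact this.congr (fun n hn => by simp)

theorem sub {f g : ℕ → ℂ} (hf : IsLP f) (hg : IsLP g) : IsLP (fun n => f n - g n) :=
  (hf.add hg.neg).congr (fun n hn => by ring)

theorem sum {ι : Type*} {s : Finset ι} {F : ι → ℕ → ℂ} (h : ∀ i ∈ s, IsLP (F i)) :
    IsLP (fun n => ∑ i ∈ s, F i n) := by
  classical
  induction s using Finset.induction with
  | empty => exact (const 0).congr (fun n hn => by simp)
  | @insert a s' hx ih =>
    have h1 := h a (Finset.mem_insert_self a s')
    have h2 := ih (fun i hi => h i (Finset.mem_insert_of_mem hi))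
    exact (h1.add h2).congr (fun n hn => Finset.sum_insert hx)

theorem div_natCast {f : ℕ → ℂ} (hf : IsLP f) : IsLP (fun n => f n / (n : ℂ)) := by
  obtain ⟨N, P, hP⟩ := hf
  refine ⟨N + 1, P, fun n hn => ?_⟩
  have hn0 : (n : ℂ) ≠ 0 := Nat.cast_ne_zero.2 (by omega)
  rw [← hP n hn]; field_simp; ring

theorem choose (i : ℕ) : IsLP (fun n => (n.choose i : ℂ)) := by
  refine ⟨0, ((i.factorial : ℂ)⁻¹) • descPochhammer ℂ i, fun n hn => ?_⟩
  rw [Polynomial.eval_smul, descPochhammer_eval_eq_descFactorial,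
    Nat.descFactorial_eq_factorial_mul_choose]
  have : (i.factorial : ℂ) ≠ 0 := Nat.cast_ne_zero.2 i.factorial_ne_zero
  push_cast
  field_simp
  rw [smul_eq_mul, one_div, mul_comm (n.choose i : ℂ), inv_mul_cancel_left₀ this]

end IsLP

theorem IsLP.to_icc {f : ℕ → ℂ} (hf : IsLP f) :
    ∃ (N : ℕ) (coef : ℤ → ℂ), ∀ n : ℕ, 2 ≤ n →
      f n = ∑ j ∈ Finset.Icc (-(N : ℤ)) (N : ℤ), coef j * (n : ℂ) ^ j := by
  obtain ⟨N, P, hP⟩ := hf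
  set d := P.natDegree with hd
  refine ⟨N + d, fun j => if 0 ≤ j + N ∧ j + N ≤ (d : ℤ) then P.coeff (j + N).toNat else 0,
    fun n hn => ?_⟩
  have hn0 : (n : ℂ) ≠ 0 := Nat.cast_ne_zero.2 (by omega)
  push_cast
  rw [← Finset.sum_subset (Finset.Icc_subset_Icc (by omega : -((N:ℤ)+(d:ℤ)) ≤ -(N:ℤ))
      (by omega : (d : ℤ) - N ≤ ((N:ℤ)+(d:ℤ))))
      (fun x hx hx2 => by
        have hx' := Finset.mem_Icc.1 hx
        rw [if_neg]
        · simp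
        · intro hcon
          exact hx2 (Finset.mem_Icc.2 (by omega)))]
  have key : ∑ j ∈ Finset.Icc (-(N:ℤ)) ((d:ℤ) - N),
      (if 0 ≤ j + N ∧ j + N ≤ (d : ℤ) then P.coeff (j + N).toNat else 0) * (n : ℂ) ^ j
      = ∑ i ∈ Finset.range (d + 1), P.coeff i * (n : ℂ) ^ i * ((n : ℂ) ^ N)⁻¹ := by
    refine Finset.sum_nbij' (fun j => (j + N).toNat) (fun i => (i : ℤ) - N)
      (fun j hj => ?_) (fun i hi => ?_) (fun j hj => ?_) (fun i hi => ?_) (fun j hj => ?_)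
    · simp only [Finset.mem_Icc] at hj; simp only [Finset.mem_range]; omega
    · simp only [Finset.mem_range] at hi; simp only [Finset.mem_Icc]; omega
    · show (((j + (N:ℤ)).toNat : ℕ) : ℤ) - N = j
      simp only [Finset.mem_Icc] at hj; omega
    · show ((((i:ℤ) - N) + N).toNat : ℕ) = i
      simp only [Finset.mem_range] at hi; omega
    · simp only [Finset.mem_Icc] at hj
      rw [if_pos (by omega)]
      have h1 : (((j + (N:ℤ)).toNat : ℕ) : ℤ) = j + N := by omega
      rw [← zpow_natCast (n:ℂ) ((j + (N:ℤ)).toNat), ← zpow_natCast (n:ℂ) N, h1, zpow_add₀ hn0]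
      field_simp
  rw [key, ← Finset.sum_mul, ← Polynomial.eval_eq_sum_range' (by omega : d < d + 1), ← hP n hn]
  field_simp


section NewtonRec
open MvPolynomial

variable {n : ℕ}

theorem alphaC_zero_arg : alphaC n 0 = 0 := by unfold alphaC; rw [if_pos (dvd_zero _)]

theorem aeval_psum (hn : 2 ≤ n) (j : ℕ) (hj : 0 < j) :
    (MvPolynomial.aeval (vroot n)) (MvPolynomial.psum (Fin (n-1)) ℂ j) = Ssum j n := by
  unfold MvPolynomial.psum
  rw [map_sum]
  simp only [map_pow, MvPolynomial.aeval_X]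
  unfold vroot
  rw [Fin.sum_univ_eq_sum_range (fun b => alphaC n (((b + 1 : ℕ)) : ℤ) ^ j) (n-1)]
  unfold Ssum
  have hsplit : ∑ b ∈ Finset.range n, alphaC n (b : ℤ) ^ j
      = ∑ b ∈ Finset.range ((n-1)+1), alphaC n (b : ℤ) ^ j := by
    rw [Nat.sub_add_cancel (by omega : 1 ≤ n)]
  rw [hsplit, Finset.sum_range_succ']
  simp [alphaC_zero_arg, zero_pow hj.ne']

theorem aeval_esymm (hn : 2 ≤ n) (i : ℕ) :
    (MvPolynomial.aeval (vroot n)) (MvPolynomial.esymm (Fin (n-1)) ℂ i) = Ecoef i n := by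
  rw [MvPolynomial.aeval_esymm_eq_multiset_esymm]
  exact esymm_vroot hn i

theorem newton_Ssum (hn : 2 ≤ n) (k : ℕ) (hk : 0 < k) :
    Ssum k n = (-1)^(k+1) * k * Ecoef k n -
      ∑ a ∈ (Finset.HasAntidiagonal.antidiagonal k).filter (fun a => a.1 ∈ Set.Ioo 0 k),
        (-1)^a.1 * Ecoef a.1 n * Ssum a.2 n := by
  have h := congrArg (MvPolynomial.aeval (vroot n))
    (MvPolynomial.psum_eq_mul_esymm_sub_sum (Fin (n-1)) ℂ k hk)
  rw [map_sub, map_mul, map_mul, map_pow, map_neg, map_one, map_natCast, map_sum,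
    aeval_psum hn k hk, aeval_esymm hn k] at h
  rw [h]
  congr 1
  apply Finset.sum_congr rfl
  intro a ha
  rw [Finset.mem_filter, Finset.HasAntidiagonal.mem_antidiagonal] at ha
  have ha2 : 0 < a.2 := by
    have := ha.2
    simp only [Set.mem_Ioo] at this
    omega
  rw [map_mul, map_mul, map_pow, map_neg, map_one, aeval_esymm hn, aeval_psum hn a.2 ha2]

theorem Ecoef_isLP (i : ℕ) : IsLP (Ecoef i) :=
  (((IsLP.const ((-1:ℂ)^i)).mul (IsLP.choose (i+1))).div_natCast).congr (fun n hn => rfl)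

theorem Ssum_isLP (k : ℕ) : IsLP (Ssum k) := by
  induction k using Nat.strong_induction_on with
  | _ k ih =>
    match k with
    | 0 =>
      refine IsLP.natCast.congr (fun n hn => ?_)
      unfold Ssum
      simp
    | (k+1) =>
      refine IsLP.congr (g := fun n => (-1)^(k+1+1) * (k+1:ℕ) * Ecoef (k+1) n -
        ∑ a ∈ (Finset.HasAntidiagonal.antidiagonal (k+1)).filter (fun a => a.1 ∈ Set.Ioo 0 (k+1)),
          (-1)^a.1 * Ecoef a.1 n * Ssum a.2 n) ?_ (fun n hn => newton_Ssum hn (k+1) (Nat.succ_pos k))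
      refine IsLP.sub ((IsLP.const _).mul (Ecoef_isLP (k+1))) (IsLP.sum ?_)
      intro a ha
      rw [Finset.mem_filter, Finset.HasAntidiagonal.mem_antidiagonal] at ha
      have h2 : a.2 < k + 1 := by
        have := ha.2; simp only [Set.mem_Ioo] at this; omega
      exact ((IsLP.const _).mul (Ecoef_isLP a.1)).mul (ih a.2 h2)

end NewtonRec

section TsumSec

noncomputable def Tsum (k1 k2 k3 : ℕ) (n : ℕ) : ℂ :=
  ∑ b1 ∈ Finset.range n, ∑ b2 ∈ Finset.range n,
    alphaC n (b1 : ℤ) ^ k1 * alphaC n (b2 : ℤ) ^ k2 * alphaC n ((b1 : ℤ) + (b2 : ℤ)) ^ k3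

variable {n : ℕ} [NeZero n]

theorem sum_range_eq_sum_zmod (g : ZMod n → ℂ) :
    ∑ b ∈ Finset.range n, g ((b : ℕ) : ZMod n) = ∑ x : ZMod n, g x := by
  refine Finset.sum_nbij' (fun b => ((b : ℕ) : ZMod n)) (fun x => x.val)
    (fun b _ => Finset.mem_univ _) (fun x _ => Finset.mem_range.2 (ZMod.val_lt x))
    (fun b hb => ?_) (fun x _ => ZMod.natCast_rightInverse x) (fun b _ => rfl)
  exact ZMod.val_cast_of_lt (Finset.mem_range.1 hb)

theorem Ssum_eq_zmod (hn : 2 ≤ n) (k : ℕ) :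
    Ssum k n = ∑ x : ZMod n, Az n x ^ k := by
  unfold Ssum
  rw [← sum_range_eq_sum_zmod (fun x => Az n x ^ k)]
  refine Finset.sum_congr rfl (fun b _ => ?_)
  rw [alphaC_eq_Az hn]
  norm_cast

theorem Tsum_eq_zmod (hn : 2 ≤ n) (k1 k2 k3 : ℕ) :
    Tsum k1 k2 k3 n = ∑ x : ZMod n, ∑ y : ZMod n,
      Az n x ^ k1 * Az n y ^ k2 * Az n (x + y) ^ k3 := by
  unfold Tsum
  rw [← sum_range_eq_sum_zmod (fun x => ∑ y : ZMod n,
    Az n x ^ k1 * Az n y ^ k2 * Az n (x + y) ^ k3)]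
  refine Finset.sum_congr rfl (fun b1 _ => ?_)
  rw [← sum_range_eq_sum_zmod (fun y =>
    Az n ((b1 : ℕ) : ZMod n) ^ k1 * Az n y ^ k2 * Az n (((b1 : ℕ) : ZMod n) + y) ^ k3)]
  refine Finset.sum_congr rfl (fun b2 _ => ?_)
  rw [alphaC_eq_Az hn (b1 : ℤ), alphaC_eq_Az hn (b2 : ℤ), alphaC_eq_Az hn ((b1 : ℤ) + (b2 : ℤ))]
  norm_cast

theorem shift_sum (y : ZMod n) (k : ℕ) :
    ∑ x : ZMod n, Az n (x + y) ^ k = ∑ x : ZMod n, Az n x ^ k :=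
  Fintype.sum_equiv (Equiv.addRight y) _ _ (fun x => rfl)

theorem Tsum_k3_zero (hn : 2 ≤ n) (k1 k2 : ℕ) :
    Tsum k1 k2 0 n = Ssum k1 n * Ssum k2 n := by
  rw [Tsum_eq_zmod hn, Ssum_eq_zmod hn, Ssum_eq_zmod hn, Finset.sum_mul_sum]
  simp [pow_zero, mul_one]

theorem Tsum_k1_zero (hn : 2 ≤ n) (k2 k3 : ℕ) :
    Tsum 0 k2 k3 n = Ssum k2 n * Ssum k3 n := by
  rw [Tsum_eq_zmod hn, Ssum_eq_zmod hn, Ssum_eq_zmod hn, Finset.sum_mul_sum, Finset.sum_comm]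
  refine Finset.sum_congr rfl (fun y _ => ?_)
  calc ∑ x : ZMod n, Az n x ^ 0 * Az n y ^ k2 * Az n (x + y) ^ k3
      = ∑ x : ZMod n, Az n y ^ k2 * Az n (x + y) ^ k3 := by
        refine Finset.sum_congr rfl (fun x _ => ?_); rw [pow_zero, one_mul]
    _ = ∑ z : ZMod n, Az n y ^ k2 * Az n z ^ k3 :=
        Fintype.sum_equiv (Equiv.addRight y) _ _ (fun x => rfl)

theorem Tsum_k2_zero (hn : 2 ≤ n) (k1 k3 : ℕ) :
    Tsum k1 0 k3 n = Ssum k1 n * Ssum k3 n := by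
  rw [Tsum_eq_zmod hn, Ssum_eq_zmod hn, Ssum_eq_zmod hn, Finset.sum_mul_sum]
  refine Finset.sum_congr rfl (fun x _ => ?_)
  calc ∑ y : ZMod n, Az n x ^ k1 * Az n y ^ 0 * Az n (x + y) ^ k3
      = ∑ y : ZMod n, Az n x ^ k1 * Az n (x + y) ^ k3 := by
        refine Finset.sum_congr rfl (fun y _ => ?_); rw [pow_zero, mul_one]  -- ?
    _ = ∑ z : ZMod n, Az n x ^ k1 * Az n z ^ k3 :=
        Fintype.sum_equiv (Equiv.addLeft x) _ _ (fun y => rfl)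

theorem pointwise_master (hn : 2 ≤ n) (a b c : ℕ) (x y : ZMod n) :
    Az n x ^ (a+1) * Az n y ^ (b+1) * Az n (x + y) ^ (c+1)
    = (Az n x ^ (a+1) * Az n y ^ b * Az n (x + y) ^ (c+2)
        - (if y = 0 then Az n x ^ (a+1) * Az n 0 ^ b * Az n x ^ (c+2) else 0))
      + (Az n x ^ a * Az n y ^ (b+1) * Az n (x + y) ^ (c+2)
        - (if x = 0 then Az n 0 ^ a * Az n y ^ (b+1) * Az n y ^ (c+2) else 0))
      + (Az n x ^ a * Az n y ^ b * Az n (x + y) ^ (c+2)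
        - (if x = 0 then Az n 0 ^ a * Az n y ^ b * Az n y ^ (c+2) else 0)
        - (if y = 0 then Az n x ^ a * Az n 0 ^ b * Az n x ^ (c+2) else 0)) := by
  by_cases hx : x = 0
  · subst hx
    by_cases hy : y = 0
    · subst hy
      simp [Az_zero hn, zero_pow (Nat.succ_ne_zero a), zero_pow (Nat.succ_ne_zero b),
        zero_pow (Nat.succ_ne_zero (c+1)), zero_pow (Nat.succ_ne_zero c)]
    · rw [if_neg hy, if_neg hy, if_pos rfl, if_pos rfl]
      simp only [zero_add, Az_zero hn, zero_pow (Nat.succ_ne_zero a)]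
      ring
  · by_cases hy : y = 0
    · subst hy
      rw [if_pos rfl, if_pos rfl, if_neg hx, if_neg hx]
      simp only [add_zero, Az_zero hn, zero_pow (Nat.succ_ne_zero b)]
      ring
    · by_cases hxy : x + y = 0
      · rw [if_neg hx, if_neg hx, if_neg hy, if_neg hy, hxy,
          Az_zero hn, zero_pow (Nat.succ_ne_zero c), zero_pow (Nat.succ_ne_zero (c+1))]
        ring
      · rw [if_neg hx, if_neg hx, if_neg hy, if_neg hy]
        have hc := Az_cocycle hn x y hx hy hxy
        linear_combination (Az n x ^ a * Az n y ^ b * Az n (x+y) ^ (c+1)) * hc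

end TsumSec

section Master
variable {n : ℕ} [NeZero n]

theorem Tsum_master (hn : 2 ≤ n) (a b c : ℕ) :
    Tsum (a+1) (b+1) (c+1) n
    = Tsum (a+1) b (c+2) n + Tsum a (b+1) (c+2) n + Tsum a b (c+2) n
      - (0:ℂ)^b * (Ssum (a+c+3) n + Ssum (a+c+2) n)
      - (0:ℂ)^a * (Ssum (b+c+3) n + Ssum (b+c+2) n) := by
  rw [Tsum_eq_zmod hn, Tsum_eq_zmod hn, Tsum_eq_zmod hn, Tsum_eq_zmod hn,
    Ssum_eq_zmod hn, Ssum_eq_zmod hn, Ssum_eq_zmod hn, Ssum_eq_zmod hn]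
  rw [Finset.sum_congr rfl (fun x _ => Finset.sum_congr rfl
    (fun y _ => pointwise_master hn a b c x y))]
  simp only [Finset.sum_add_distrib, Finset.sum_sub_distrib]
  have slice_y : ∀ (p q : ℕ),
      (∑ x : ZMod n, ∑ y : ZMod n,
        (if y = 0 then Az n x ^ p * Az n 0 ^ b * Az n x ^ q else 0))
      = (0:ℂ)^b * ∑ x : ZMod n, Az n x ^ (p + q) := by
    intro p q
    simp only [Finset.sum_ite_eq', Finset.mem_univ, if_true]
    rw [Finset.mul_sum]
    refine Finset.sum_congr rfl (fun x _ => ?_)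
    rw [Az_zero hn, pow_add]
    ring
  have slice_x : ∀ (p q : ℕ),
      (∑ x : ZMod n, ∑ y : ZMod n,
        (if x = 0 then Az n 0 ^ a * Az n y ^ p * Az n y ^ q else 0))
      = (0:ℂ)^a * ∑ y : ZMod n, Az n y ^ (p + q) := by
    intro p q
    rw [Finset.sum_comm]
    simp only [Finset.sum_ite_eq', Finset.mem_univ, if_true]
    rw [Finset.mul_sum]
    refine Finset.sum_congr rfl (fun y _ => ?_)
    rw [Az_zero hn, pow_add]
    ring
  rw [slice_y (a+1) (c+2), slice_y a (c+2), slice_x (b+1) (c+2), slice_x b (c+2)]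
  have e1 : a + 1 + (c + 2) = a + c + 3 := by omega
  have e2 : a + (c + 2) = a + c + 2 := by omega
  have e3 : b + 1 + (c + 2) = b + c + 3 := by omega
  have e4 : b + (c + 2) = b + c + 2 := by omega
  rw [e1, e2, e3, e4]
  ring

end Master

theorem Tsum_isLP (k1 k2 k3 : ℕ) : IsLP (Tsum k1 k2 k3) := by
  suffices H : ∀ m k1 k2 k3, k1 + k2 = m → IsLP (Tsum k1 k2 k3) from H (k1+k2) k1 k2 k3 rfl
  intro m
  induction m using Nat.strong_induction_on with
  | _ m ih =>
    intro k1 k2 k3 hm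
    match k1, k2, k3, hm with
    | 0, k2, k3, _ =>
      refine ((Ssum_isLP k2).mul (Ssum_isLP k3)).congr (fun n hn => ?_)
      haveI : NeZero n := ⟨by omega⟩
      exact Tsum_k1_zero hn k2 k3
    | k1+1, 0, k3, _ =>
      refine ((Ssum_isLP (k1+1)).mul (Ssum_isLP k3)).congr (fun n hn => ?_)
      haveI : NeZero n := ⟨by omega⟩
      exact Tsum_k2_zero hn (k1+1) k3
    | k1+1, k2+1, 0, _ =>
      refine ((Ssum_isLP (k1+1)).mul (Ssum_isLP (k2+1))).congr (fun n hn => ?_)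
      haveI : NeZero n := ⟨by omega⟩
      exact Tsum_k3_zero hn (k1+1) (k2+1)
    | a+1, b+1, c+1, hm =>
      have h1 : IsLP (Tsum (a+1) b (c+2)) := ih (a+1+b) (by omega) (a+1) b (c+2) rfl
      have h2 : IsLP (Tsum a (b+1) (c+2)) := ih (a+(b+1)) (by omega) a (b+1) (c+2) rfl
      have h3 : IsLP (Tsum a b (c+2)) := ih (a+b) (by omega) a b (c+2) rfl
      have hS : IsLP (fun nn => (0:ℂ)^b * (Ssum (a+c+3) nn + Ssum (a+c+2) nn)) :=
        (IsLP.const _).mul ((Ssum_isLP _).add (Ssum_isLP _))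
      have hS' : IsLP (fun nn => (0:ℂ)^a * (Ssum (b+c+3) nn + Ssum (b+c+2) nn)) :=
        (IsLP.const _).mul ((Ssum_isLP _).add (Ssum_isLP _))
      refine ((((h1.add h2).add h3).sub hS).sub hS').congr (fun n hn => ?_)
      haveI : NeZero n := ⟨by omega⟩
      exact Tsum_master hn a b c


/-- For fixed `k_1, k_2, k_3` there is a Laurent polynomial `L` with complex coefficients
such that for all `n ≥ 2`,
`∑_{b_1=0}^{n-1} ∑_{b_2=0}^{n-1} α_{n,b_1}^{k_1} α_{n,b_2}^{k_2} α_{n,b_1+b_2}^{k_3} = L(n)`. -/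
theorem double_sum_alpha_laurent (k1 k2 k3 : ℕ) :
    ∃ (N : ℕ) (coef : ℤ → ℂ), ∀ n : ℕ, 2 ≤ n →
      ∑ b1 ∈ Finset.range n, ∑ b2 ∈ Finset.range n,
        alphaC n (b1 : ℤ) ^ k1 * alphaC n (b2 : ℤ) ^ k2 * alphaC n ((b1 : ℤ) + (b2 : ℤ)) ^ k3 =
      ∑ j ∈ Finset.Icc (-(N : ℤ)) (N : ℤ), coef j * (n : ℂ) ^ j := by
  obtain ⟨N, coef, h⟩ := (Tsum_isLP k1 k2 k3).to_icc
  exact ⟨N, coef, fun n hn => h n hn⟩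
end
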